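/- (Theorem 1) The forward- and backward-dependent unfactorized CDM ranking models are equivalent under the bijection f: for every parameter θ = (δ, β, U), every covariate function x : 𝒰 → ℝ^d, every choice set S ⊆ 𝒰 with |S| ≥ 2, and every j ∈ S, the forward-dependent choice probability under θ equals the backward-dependent choice probability under f(θ), i.e. exp(V^F_θ(j|S)) / Σ_{k ∈ S} exp(V^F_θ(k|S)) = exp(V^B_{f(θ)}(j|S)) / Σ_{k ∈ S} exp(V^B_{f(θ)}(k|S)). -/
import Mathlib


open Finset

/-- Forward-dependent representative utility of the unfactorized CDM:
`V^F_θ(j|S) = δ_j + β·x_j + Σ_{l ∈ S, l ≠ j} u_{jl}`. -/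
noncomputable def VF {𝒰 : Type*} [DecidableEq 𝒰] {d : ℕ}
    (δ : 𝒰 → ℝ) (β : Fin d → ℝ) (u : 𝒰 → 𝒰 → ℝ)
    (x : 𝒰 → Fin d → ℝ) (S : Finset 𝒰) (j : 𝒰) : ℝ :=
  δ j + (∑ i, β i * x j i) + ∑ l ∈ S.erase j, u j l

/-- Backward-dependent representative utility of the unfactorized CDM:
`V^B_θ(j|S) = δ_j + β·x_j + Σ_{l ∈ 𝒰 \ S} u_{jl}`. -/
noncomputable def VB {𝒰 : Type*} [Fintype 𝒰] [DecidableEq 𝒰] {d : ℕ}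
    (δ : 𝒰 → ℝ) (β : Fin d → ℝ) (u : 𝒰 → 𝒰 → ℝ)
    (x : 𝒰 → Fin d → ℝ) (S : Finset 𝒰) (j : 𝒰) : ℝ :=
  δ j + (∑ i, β i * x j i) + ∑ l ∈ Sᶜ, u j l

/-- The parameter map `f` of the unfactorized CDM, sending `(δ, β, U)` to
`({δ_i + Σ_{j ≠ i} u_{ij}}_i, β, −U)`. -/
noncomputable def cdmF (𝒰 : Type*) [Fintype 𝒰] [DecidableEq 𝒰] (d : ℕ) :
    ((𝒰 → ℝ) × (Fin d → ℝ) × (𝒰 → 𝒰 → ℝ)) → ((𝒰 → ℝ) × (Fin d → ℝ) × (𝒰 → 𝒰 → ℝ)) :=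
  fun θ =>
    (fun i => θ.1 i + ∑ j ∈ Finset.univ.erase i, θ.2.2 i j, θ.2.1, fun i j => -θ.2.2 i j)

/-- (Theorem 1) The forward- and backward-dependent unfactorized CDM ranking models are
equivalent under the bijection `f`: for every `θ = (δ, β, U)`, covariates `x`, choice set
`S` with `|S| ≥ 2`, and `j ∈ S`, the forward-dependent choice probability under `θ` equals
the backward-dependent choice probability under `f(θ)`. -/
theorem cdm_forward_eq_backward_prob
    (𝒰 : Type*) [Fintype 𝒰] [DecidableEq 𝒰] (d : ℕ)
    (θ : (𝒰 → ℝ) × (Fin d → ℝ) × (𝒰 → 𝒰 → ℝ))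
    (x : 𝒰 → Fin d → ℝ) (S : Finset 𝒰) (hS : 2 ≤ S.card) (j : 𝒰) (hj : j ∈ S) :
    Real.exp (VF θ.1 θ.2.1 θ.2.2 x S j) / ∑ k ∈ S, Real.exp (VF θ.1 θ.2.1 θ.2.2 x S k)
      = Real.exp (VB (cdmF 𝒰 d θ).1 (cdmF 𝒰 d θ).2.1 (cdmF 𝒰 d θ).2.2 x S j) /
          ∑ k ∈ S, Real.exp (VB (cdmF 𝒰 d θ).1 (cdmF 𝒰 d θ).2.1 (cdmF 𝒰 d θ).2.2 x S k) := by
  have key : ∀ k ∈ S, VB (cdmF 𝒰 d θ).1 (cdmF 𝒰 d θ).2.1 (cdmF 𝒰 d θ).2.2 x S k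
      = VF θ.1 θ.2.1 θ.2.2 x S k := by
    intro k hk
    have hsub : Sᶜ ⊆ Finset.univ.erase k := by
      intro l hl
      simp only [Finset.mem_compl] at hl
      exact Finset.mem_erase.mpr ⟨fun h => hl (h ▸ hk), Finset.mem_univ l⟩
    have hsd : (Finset.univ.erase k) \ Sᶜ = S.erase k := by
      ext l
      simp [Finset.mem_erase, Finset.mem_sdiff, and_comm]
    have := Finset.sum_sdiff (f := fun l => θ.2.2 k l) hsub
    rw [hsd] at this
    simp only [VB, VF, cdmF, Finset.sum_neg_distrib]
    linarith
  have hsum : ∑ k ∈ S, Real.exp (VB (cdmF 𝒰 d θ).1 (cdmF 𝒰 d θ).2.1 (cdmF 𝒰 d θ).2.2 x S k)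
      = ∑ k ∈ S, Real.exp (VF θ.1 θ.2.1 θ.2.2 x S k) :=
    Finset.sum_congr rfl fun k hk => by rw [key k hk]
  rw [key j hj, hsum]
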